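/- arXiv:2402.08247 — 4 statements merged into one kernel-verified Lean document; each statement's English description precedes it below -/
import Mathlib

section
/- For any function Ψ : ℕ × 2^ℕ → {0,1}, if S is a measurable class of sets A such that for all n, A(n) = Ψ(n, A \ {n}), then S has Lebesgue measure zero. -/
open MeasureTheory

/-- A set (of any primcodable type) is computably enumerable. -/
def CE {α : Type*} [Primcodable α] (S : Set α) : Prop :=
  ∃ f : α →. ℕ, Partrec f ∧ S = f.Dom

/-- The `y`-th finite set in a canonical listing of all finite subsets of `ℕ`. -/
def Dfin (y : ℕ) : Set ℕ := ↑(Denumerable.ofNat (Finset ℕ) y)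

/-- Application of the enumeration operator with c.e. index set `W` to an oracle `X`. -/
def enumOp (W : Set ℕ) (X : Set ℕ) : Set ℕ :=
  {x | ∃ y, Nat.pair x y ∈ W ∧ Dfin y ⊆ X}

/-- Enumeration reducibility. -/
def EnumRed (A B : Set ℕ) : Prop := ∃ W : Set ℕ, CE W ∧ A = enumOp W B

/-- Enumeration equivalence. -/
def EnumEquiv (A B : Set ℕ) : Prop := EnumRed A B ∧ EnumRed B A

/-- Application of a hyper-enumeration operator with c.e. index set `W` to an oracle `X`. -/
def henumOp (W : Set ℕ) (X : Set ℕ) : Set ℕ :=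
  {x | ∀ f : List ℕ, ∃ n y,
    Nat.pair (Encodable.encode (f.take n)) (Nat.pair x y) ∈ W ∧ Dfin y ⊆ X}

/-- Hyper-enumeration reducibility. -/
def HypEnumRed (B A : Set ℕ) : Prop := ∃ W : Set ℕ, CE W ∧ B = henumOp W A

def Cototal (A : Set ℕ) : Prop := EnumRed A Aᶜ

def HypCototal (A : Set ℕ) : Prop := HypEnumRed A Aᶜ

def UnifIntroenum (X : Set ℕ) : Prop :=
  X.Infinite ∧ ∃ W : Set ℕ, CE W ∧ ∀ Y ⊆ X, Y.Infinite → enumOp W Y = X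

def Introenum (X : Set ℕ) : Prop :=
  X.Infinite ∧ ∀ Y ⊆ X, Y.Infinite → ∃ W : Set ℕ, CE W ∧ enumOp W Y = X

/-- View a point of Cantor space as a subset of `ℕ`. -/
def toSet (A : ℕ → Bool) : Set ℕ := {n | A n = true}

/-- Remove `n` from (the set coded by) `A`. -/
def drop (A : ℕ → Bool) (n : ℕ) : ℕ → Bool := fun m => if m = n then false else A m

/-- `A` is `Ψ`-autoreducible. -/
def AutoRed (Ψ : ℕ → (ℕ → Bool) → Bool) (A : ℕ → Bool) : Prop :=
  ∀ n, A n = Ψ n (drop A n)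

/-- The basic clopen cylinder of a finite binary string. -/
def cyl (σ : List Bool) : Set (ℕ → Bool) := {A | ∀ i : Fin σ.length, A i = σ.get i}

/-- `μ` is the uniform (fair-coin) measure on Cantor space: it gives each cylinder
of a string of length `k` measure `2⁻ᵏ`.  (This characterizes the measure uniquely.) -/
def IsCoinMeasure (μ : Measure (ℕ → Bool)) : Prop :=
  ∀ σ : List Bool, μ (cyl σ) = 2⁻¹ ^ σ.length

/-- The first `k` bits of `A`. -/
def res (A : ℕ → Bool) (k : ℕ) : List Bool := List.ofFn fun i : Fin k => A i

/-- A `Π⁰₂` class in Cantor space. -/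
def IsPi02 (C : Set (ℕ → Bool)) : Prop :=
  ∃ R : ℕ → List Bool → Bool, Computable (fun p : ℕ × List Bool => R p.1 p.2) ∧
    C = {A | ∀ m, ∃ k, R m (res A k) = true}

/-- A `Π⁰₃` class in Cantor space. -/
def IsPi03 (C : Set (ℕ → Bool)) : Prop :=
  ∃ R : ℕ → ℕ → List Bool → Bool,
    Computable (fun p : ℕ × ℕ × List Bool => R p.1 p.2.1 p.2.2) ∧
    C = {A | ∀ m, ∃ k, ∀ j, R m k (res A j) = true}

/-- The `m`-th level of the open test determined by the c.e. set `W` of pairs. -/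
def testSet (W : Set (ℕ × List Bool)) (m : ℕ) : Set (ℕ → Bool) :=
  ⋃ σ ∈ {σ | (m, σ) ∈ W}, cyl σ

/-- Martin-Löf randomness (with respect to a measure `μ` on Cantor space). -/
def MLRandom (μ : Measure (ℕ → Bool)) (A : ℕ → Bool) : Prop :=
  ∀ W : Set (ℕ × List Bool), CE W →
    (∀ m, μ (testSet W m) ≤ 2⁻¹ ^ m) → ∃ m, A ∉ testSet W m

/-- 2-randomness: passing all uniformly `Σ⁰₂` tests. -/
def TwoRandom (μ : Measure (ℕ → Bool)) (A : ℕ → Bool) : Prop :=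
  ∀ R : ℕ → ℕ → List Bool → Bool,
    Computable (fun p : ℕ × ℕ × List Bool => R p.1 p.2.1 p.2.2) →
    (∀ m, μ {A | ∃ k, ∀ j, R m k (res A j) = true} ≤ 2⁻¹ ^ m) →
    ∃ m, A ∉ {A | ∃ k, ∀ j, R m k (res A j) = true}

/-- Weak 2-randomness: avoiding every null `Π⁰₂` class. -/
def Weak2Random (μ : Measure (ℕ → Bool)) (A : ℕ → Bool) : Prop :=
  ∀ C : Set (ℕ → Bool), IsPi02 C → μ C = 0 → A ∉ C

/-- Weak 3-randomness: avoiding every null `Π⁰₃` class. -/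
def Weak3Random (μ : Measure (ℕ → Bool)) (A : ℕ → Bool) : Prop :=
  ∀ C : Set (ℕ → Bool), IsPi03 C → μ C = 0 → A ∉ C

namespace ARaux

/-- restriction of a point of Cantor space to its first `n` bits -/
def proj (n : ℕ) (A : ℕ → Bool) : Fin n → Bool := fun i => A i

lemma measurable_proj (n : ℕ) : Measurable (proj n) :=
  measurable_pi_lambda _ fun i => measurable_pi_apply _

lemma measurableSet_fin {n : ℕ} (E : Set (Fin n → Bool)) : MeasurableSet E :=
  E.to_countable.measurableSet

lemma cyl_ofFn (n : ℕ) (f : Fin n → Bool) : cyl (List.ofFn f) = proj n ⁻¹' {f} := by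
  ext A
  simp only [cyl, Set.mem_setOf_eq, Set.mem_preimage, Set.mem_singleton_iff, proj]
  constructor
  · intro h; funext i
    have := h (Fin.cast (List.length_ofFn (f := f)).symm i)
    rw [List.get_ofFn] at this
    show A i = f i
    convert this using 2 <;> simp
  · intro h i
    rw [List.get_ofFn]
    have := congrFun h (Fin.cast (by simp) i)
    simpa [proj] using this

lemma measure_cylF {μ : Measure (ℕ → Bool)} (hμ : IsCoinMeasure μ) (n : ℕ) (f : Fin n → Bool) :
    μ (proj n ⁻¹' {f}) = 2⁻¹ ^ n := by
  rw [← cyl_ofFn, hμ, List.length_ofFn]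

/-- the collection of basic cylinders -/
def C : Set (Set (ℕ → Bool)) := {X | ∃ n f, X = proj n ⁻¹' {f}}

lemma lift_le {n m : ℕ} (h : n ≤ m) (E : Set (Fin n → Bool)) :
    proj n ⁻¹' E = proj m ⁻¹' ((fun g (i : Fin n) => g (Fin.castLE h i)) ⁻¹' E) := by
  rfl

lemma pi_C : IsPiSystem C := by
  have key : ∀ (n m : ℕ), n ≤ m → ∀ (f : Fin n → Bool) (g : Fin m → Bool),
      (proj n ⁻¹' {f} ∩ proj m ⁻¹' {g}).Nonempty →
      proj n ⁻¹' {f} ∩ proj m ⁻¹' {g} = proj m ⁻¹' {g} := by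
    intro n m h f g ⟨A, hA1, hA2⟩
    simp only [Set.mem_preimage, Set.mem_singleton_iff] at hA1 hA2
    apply Set.inter_eq_self_of_subset_right
    intro B hB
    simp only [Set.mem_preimage, Set.mem_singleton_iff] at hB ⊢
    funext i
    have : proj n B i = proj m B (Fin.castLE h i) := rfl
    rw [this, hB, ← hA2, ← hA1]
    rfl
  rintro s ⟨n, f, rfl⟩ t ⟨m, g, rfl⟩ hne
  rcases le_total n m with h | h
  · rw [key n m h f g hne]; exact ⟨m, g, rfl⟩
  · rw [Set.inter_comm] at hne ⊢
    rw [key m n h g f hne]; exact ⟨n, f, rfl⟩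

lemma genC_mem_projE {n : ℕ} (E : Set (Fin n → Bool)) :
    MeasurableSet[MeasurableSpace.generateFrom C] (proj n ⁻¹' E) := by
  have : proj n ⁻¹' E = ⋃ f ∈ E, proj n ⁻¹' {f} := by ext A; simp
  rw [this]
  exact MeasurableSet.biUnion (Set.to_countable E)
    fun f _ => MeasurableSpace.measurableSet_generateFrom ⟨n, f, rfl⟩

lemma eval_preimage (i : ℕ) (s : Set Bool) :
    (fun A : ℕ → Bool => A i) ⁻¹' s = proj (i + 1) ⁻¹' ((fun g => g (Fin.last i)) ⁻¹' s) := by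
  ext A; simp [proj, Fin.last]

lemma gen_C : (inferInstance : MeasurableSpace (ℕ → Bool)) = MeasurableSpace.generateFrom C := by
  apply le_antisymm
  · show MeasurableSpace.pi ≤ _
    refine iSup_le fun i => ?_
    rw [← measurable_iff_comap_le]
    intro s _
    rw [eval_preimage]
    exact genC_mem_projE _
  · refine MeasurableSpace.generateFrom_le ?_
    rintro X ⟨n, f, rfl⟩
    exact measurable_proj n (measurableSet_fin _)

/-- the algebra of finite-dimensional sets -/
def Alg : Set (Set (ℕ → Bool)) := {X | ∃ n E, X = proj n ⁻¹' E}

lemma isSetAlgebra_Alg : IsSetAlgebra Alg where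
  empty_mem := ⟨0, ∅, by simp⟩
  compl_mem := by rintro s ⟨n, E, rfl⟩; exact ⟨n, Eᶜ, by simp⟩
  union_mem := by
    rintro s t ⟨n, E, rfl⟩ ⟨m, F, rfl⟩
    rcases le_total n m with h | h
    · exact ⟨m, _ ∪ F, by rw [Set.preimage_union, ← lift_le h]⟩
    · exact ⟨n, E ∪ _, by rw [Set.preimage_union, ← lift_le h]⟩

lemma gen_Alg : (inferInstance : MeasurableSpace (ℕ → Bool)) =
    MeasurableSpace.generateFrom Alg := by
  apply le_antisymm
  · rw [gen_C]
    exact MeasurableSpace.generateFrom_mono (by rintro X ⟨n, f, rfl⟩; exact ⟨n, {f}, rfl⟩)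
  · refine MeasurableSpace.generateFrom_le ?_
    rintro X ⟨n, E, rfl⟩
    exact measurable_proj n (measurableSet_fin _)

end ARaux

namespace ARaux

/-- flip bit `n` -/
def flipb (n : ℕ) (A : ℕ → Bool) : ℕ → Bool := fun m => if m = n then !A m else A m

lemma measurable_flipb (n : ℕ) : Measurable (flipb n) := by
  apply measurable_pi_lambda
  intro m
  by_cases h : m = n
  · simp only [flipb, h, if_true]
    exact (Measurable.of_discrete (f := Bool.not)).comp (measurable_pi_apply n)
  · simp only [flipb, h, if_false]
    exact measurable_pi_apply m

lemma flipb_preimage_cylF (n k : ℕ) (f : Fin k → Bool) :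
    flipb n ⁻¹' (proj k ⁻¹' {f}) =
      proj k ⁻¹' {fun i : Fin k => if (i : ℕ) = n then !f i else f i} := by
  ext A
  simp only [Set.mem_preimage, Set.mem_singleton_iff]
  constructor
  · intro h; funext i
    have h1 : (if ((i : ℕ) = n) then !A i else A i) = f i := congrFun h i
    show A (i : ℕ) = if ((i : ℕ) = n) then !f i else f i
    by_cases hi : (i : ℕ) = n
    · rw [if_pos hi]; rw [if_pos hi] at h1; rw [← h1, Bool.not_not]
    · rw [if_neg hi]; rw [if_neg hi] at h1; exact h1
  · intro h; funext i
    have h1 : A (i : ℕ) = (if ((i : ℕ) = n) then !f i else f i) := congrFun h i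
    show (if ((i : ℕ) = n) then !A i else A i) = f i
    by_cases hi : (i : ℕ) = n
    · rw [if_pos hi]; rw [if_pos hi] at h1; rw [h1, Bool.not_not]
    · rw [if_neg hi]; rw [if_neg hi] at h1; exact h1

lemma measurePreserving_flipb {μ : Measure (ℕ → Bool)} (hμ : IsCoinMeasure μ) (n : ℕ) :
    MeasurePreserving (flipb n) μ μ := by
  refine ⟨measurable_flipb n, ?_⟩
  have hmeas := measurable_flipb n
  have huniv : μ Set.univ = 1 := by
    have h0 := hμ []
    have : cyl [] = Set.univ := by
      ext A
      constructor
      · intro _; trivial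
      · intro _ i; exact absurd i.2 (Nat.not_lt_zero _)
    rw [this] at h0
    simpa using h0
  haveI : IsFiniteMeasure μ := ⟨by rw [huniv]; exact ENNReal.one_lt_top⟩
  haveI : IsFiniteMeasure (Measure.map (flipb n) μ) :=
    ⟨by rw [Measure.map_apply hmeas MeasurableSet.univ, Set.preimage_univ, huniv]
        exact ENNReal.one_lt_top⟩
  refine MeasureTheory.ext_of_generate_finite C gen_C pi_C ?_ ?_
  · rintro X ⟨k, f, rfl⟩
    rw [Measure.map_apply (measurable_flipb n) (measurable_proj k (measurableSet_fin _)),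
      flipb_preimage_cylF, measure_cylF hμ, measure_cylF hμ]
  · rw [Measure.map_apply (measurable_flipb n) MeasurableSet.univ, Set.preimage_univ]

lemma flipb_disjoint {Ψ : ℕ → (ℕ → Bool) → Bool} {S : Set (ℕ → Bool)}
    (hauto : ∀ A ∈ S, AutoRed Ψ A) (n : ℕ) : Disjoint S (flipb n ⁻¹' S) := by
  rw [Set.disjoint_left]
  intro A hA hA'
  have hd : drop (flipb n A) n = drop A n := by
    funext m
    by_cases h : m = n <;> simp [drop, flipb, h]
  have h1 := hauto A hA n
  have h2 := hauto _ hA' n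
  rw [hd, ← h1] at h2
  have : flipb n A n = !A n := by simp [flipb]
  rw [this] at h2
  simp at h2

/-- key halving lemma -/
lemma halving {μ : Measure (ℕ → Bool)} (hμ : IsCoinMeasure μ)
    {Ψ : ℕ → (ℕ → Bool) → Bool} {S : Set (ℕ → Bool)}
    (hS : NullMeasurableSet S μ) (hauto : ∀ A ∈ S, AutoRed Ψ A)
    (k : ℕ) (f : Fin k → Bool) :
    2 * μ (S ∩ proj k ⁻¹' {f}) ≤ μ (proj k ⁻¹' {f}) := by
  set T := flipb k
  have hmp : MeasurePreserving T μ μ := measurePreserving_flipb hμ k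
  have hcyl : T ⁻¹' (proj k ⁻¹' {f}) = proj k ⁻¹' {f} := by
    rw [flipb_preimage_cylF]
    have : (fun i : Fin k => if (i : ℕ) = k then !f i else f i) = f := by
      funext i; simp [Nat.ne_of_lt i.2]
    rw [this]
  have hcylm : MeasurableSet (proj k ⁻¹' {f}) := measurable_proj k (measurableSet_fin _)
  set Y := S ∩ proj k ⁻¹' {f} with hY
  have hYnm : NullMeasurableSet Y μ := hS.inter hcylm.nullMeasurableSet
  have hTY : T ⁻¹' Y = (T ⁻¹' S) ∩ proj k ⁻¹' {f} := by
    rw [hY, Set.preimage_inter, hcyl]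
  have hTYnm : NullMeasurableSet (T ⁻¹' Y) μ :=
    hYnm.preimage hmp.quasiMeasurePreserving
  have hdisj : Disjoint Y (T ⁻¹' Y) := by
    refine Set.disjoint_left.2 fun A hA hA' => ?_
    rw [hTY] at hA'
    exact Set.disjoint_left.1 (flipb_disjoint hauto k) hA.1 hA'.1
  have hμTY : μ (T ⁻¹' Y) = μ Y := hmp.measure_preimage hYnm
  have hsub : Y ∪ T ⁻¹' Y ⊆ proj k ⁻¹' {f} := by
    rw [hTY]
    exact Set.union_subset (Set.inter_subset_right) (Set.inter_subset_right)
  calc 2 * μ Y = μ Y + μ (T ⁻¹' Y) := by rw [hμTY, two_mul]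
    _ = μ (Y ∪ T ⁻¹' Y) := (measure_union₀ hTYnm hdisj.aedisjoint).symm
    _ ≤ μ (proj k ⁻¹' {f}) := measure_mono hsub

end ARaux

namespace ARaux

lemma coin_univ {μ : Measure (ℕ → Bool)} (hμ : IsCoinMeasure μ) : μ Set.univ = 1 := by
  have h0 := hμ []
  have : cyl [] = Set.univ := by
    ext A
    constructor
    · intro _; trivial
    · intro _ i; exact absurd i.2 (Nat.not_lt_zero _)
  rw [this] at h0
  simpa using h0

lemma halving_Alg {μ : Measure (ℕ → Bool)} (hμ : IsCoinMeasure μ)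
    {Ψ : ℕ → (ℕ → Bool) → Bool} {S : Set (ℕ → Bool)}
    (hS : NullMeasurableSet S μ) (hauto : ∀ A ∈ S, AutoRed Ψ A)
    (n : ℕ) (E : Set (Fin n → Bool)) :
    2 * μ (S ∩ proj n ⁻¹' E) ≤ μ (proj n ⁻¹' E) := by
  classical
  have hEfin := Set.toFinite E
  set F := hEfin.toFinset with hF
  have hXU : proj n ⁻¹' E = ⋃ f ∈ F, proj n ⁻¹' {f} := by
    ext A
    constructor
    · intro hA
      exact Set.mem_biUnion (hEfin.mem_toFinset.2 hA) rfl
    · intro hA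
      obtain ⟨f, hf, hAf⟩ := Set.mem_iUnion₂.1 hA
      rw [Set.mem_preimage, Set.mem_singleton_iff] at hAf
      rw [Set.mem_preimage, hAf]
      exact hEfin.mem_toFinset.1 hf
  have hmeasX : μ (proj n ⁻¹' E) = ∑ f ∈ F, μ (proj n ⁻¹' {f}) := by
    rw [hXU]
    exact measure_biUnion_finset
      (fun f _ g _ hfg => (Set.disjoint_singleton.2 hfg).preimage _)
      (fun f _ => measurable_proj n (measurableSet_fin _))
  calc 2 * μ (S ∩ proj n ⁻¹' E) ≤ 2 * ∑ f ∈ F, μ (S ∩ proj n ⁻¹' {f}) := by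
        refine mul_le_mul_right ?_ 2
        rw [hXU, Set.inter_iUnion₂]
        exact measure_biUnion_finset_le F _
    _ = ∑ f ∈ F, 2 * μ (S ∩ proj n ⁻¹' {f}) := Finset.mul_sum _ _ _
    _ ≤ ∑ f ∈ F, μ (proj n ⁻¹' {f}) :=
        Finset.sum_le_sum fun f _ => halving hμ hS hauto n f
    _ = μ (proj n ⁻¹' E) := hmeasX.symm

end ARaux

open ARaux

/-- Any measurable class of `Ψ`-autoreducible sets has measure zero. -/
theorem stmt_0 (μ : Measure (ℕ → Bool)) (hμ : IsCoinMeasure μ)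
    (Ψ : ℕ → (ℕ → Bool) → Bool) (S : Set (ℕ → Bool))
    (hS : NullMeasurableSet S μ) (hauto : ∀ A ∈ S, AutoRed Ψ A) :
    μ S = 0 := by
  classical
  haveI : IsFiniteMeasure μ := ⟨by rw [coin_univ hμ]; exact ENNReal.one_lt_top⟩
  obtain ⟨T, hST, hTm, hTS⟩ := hS.exists_measurable_superset_ae_eq
  have hμT : μ T = μ S := measure_congr hTS
  have dense := Measure.MeasureDense.of_generateFrom_isSetAlgebra_finite (μ := μ)
    isSetAlgebra_Alg gen_Alg
  have key : ∀ ε : ENNReal, 0 < ε → ε ≠ ⊤ → μ T ≤ 3 * ε := by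
    intro ε hε hεtop
    obtain ⟨X, hX, hd⟩ := dense.approx T hTm (measure_ne_top μ T) ε.toReal
      (ENNReal.toReal_pos hε.ne' hεtop)
    rw [ENNReal.ofReal_toReal hεtop] at hd
    obtain ⟨n, E, rfl⟩ := hX
    set X := proj n ⁻¹' E with hXdef
    have hsub1 : T \ X ⊆ symmDiff T X := by
      rw [Set.symmDiff_def]; exact Set.subset_union_left
    have hsub2 : X \ T ⊆ symmDiff T X := by
      rw [Set.symmDiff_def]; exact Set.subset_union_right
    have h1 : μ (T \ X) ≤ ε := ((measure_mono hsub1).trans_lt hd).le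
    have h2 : μ (X \ T) ≤ ε := ((measure_mono hsub2).trans_lt hd).le
    have hTX : μ (T ∩ X) = μ (S ∩ X) :=
      measure_congr (hTS.inter (Filter.EventuallyEq.refl _ _))
    have hhalf := halving_Alg hμ hS hauto n E
    rw [← hXdef, ← hTX] at hhalf
    have hA : μ T ≤ μ (T ∩ X) + ε := by
      calc μ T ≤ μ ((T ∩ X) ∪ (T \ X)) := measure_mono (by
            intro a ha; by_cases h : a ∈ X
            · exact Or.inl ⟨ha, h⟩
            · exact Or.inr ⟨ha, h⟩)
        _ ≤ μ (T ∩ X) + μ (T \ X) := measure_union_le _ _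
        _ ≤ μ (T ∩ X) + ε := add_le_add_right h1 _
    have hB : μ X ≤ μ T + ε := by
      calc μ X ≤ μ ((X \ T) ∪ T) := measure_mono (by
            intro a ha; by_cases h : a ∈ T
            · exact Or.inr h
            · exact Or.inl ⟨ha, h⟩)
        _ ≤ μ (X \ T) + μ T := measure_union_le _ _
        _ ≤ ε + μ T := add_le_add_left h2 _
        _ = μ T + ε := add_comm _ _
    have : μ T + μ T ≤ μ T + 3 * ε := by
      calc μ T + μ T ≤ (μ (T ∩ X) + ε) + (μ (T ∩ X) + ε) := add_le_add hA hA
        _ = 2 * μ (T ∩ X) + 2 * ε := by ring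
        _ ≤ μ X + 2 * ε := add_le_add_left hhalf _
        _ ≤ (μ T + ε) + 2 * ε := add_le_add_left hB _
        _ = μ T + 3 * ε := by ring
    exact (ENNReal.add_le_add_iff_left (measure_ne_top μ T)).1 this
  rw [← hμT]
  by_contra h0
  have hpos : 0 < μ T := pos_iff_ne_zero.2 h0
  obtain ⟨d, hd0, hdT⟩ := exists_between hpos
  have hdne : d ≠ ⊤ := (hdT.trans_le le_top).ne  -- wrong maybe
  have hdiv0 : (0 : ENNReal) < d / 3 := ENNReal.div_pos hd0.ne' (by norm_num)
  have hdivtop : d / 3 ≠ ⊤ := by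
    exact (ENNReal.div_lt_top hdne (by norm_num)).ne
  have hle := key (d / 3) hdiv0 hdivtop
  rw [ENNReal.mul_div_cancel' (by norm_num) (by norm_num)] at hle
  exact absurd (lt_of_le_of_lt hle hdT) (lt_irrefl _)
end

section
/- There exists a non-measurable class S₀ of subsets of ℕ and a function Ψ₀ : ℕ × 2^ℕ → {0,1} such that every element of S₀ is Ψ₀-autoreducible. -/
open MeasureTheory

namespace StmtAux

noncomputable section

/-- The set of cylinders. -/
def Cyls : Set (Set (ℕ → Bool)) := {S | ∃ σ, S = cyl σ}

lemma mem_cyl {A : ℕ → Bool} {σ : List Bool} :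
    A ∈ cyl σ ↔ ∀ i (h : i < σ.length), A i = σ.get ⟨i, h⟩ := by
  constructor
  · intro h i hi; exact h ⟨i, hi⟩
  · intro h i; exact h i i.2

lemma cyl_nil : cyl ([] : List Bool) = Set.univ := by
  ext A; simp [cyl]

lemma measurableSet_cyl (σ : List Bool) : MeasurableSet (cyl σ) := by
  have : cyl σ = ⋂ i : Fin σ.length, {A : ℕ → Bool | A i = σ.get i} := by
    ext A; simp [cyl, Set.mem_iInter]
  rw [this]
  refine MeasurableSet.iInter fun i => ?_
  have : {A : ℕ → Bool | A i = σ.get i} = (fun A : ℕ → Bool => A i) ⁻¹' {σ.get i} := rfl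
  rw [this]
  exact measurable_pi_apply (i : ℕ) (measurableSet_singleton _)

lemma isPiSystem_cyls : IsPiSystem Cyls := by
  rintro S ⟨σ, rfl⟩ T ⟨τ, rfl⟩ hne
  obtain ⟨A, hA1, hA2⟩ := hne
  rcases le_total σ.length τ.length with h | h
  · refine ⟨τ, ?_⟩
    have hpre : ∀ i (hi : i < σ.length), σ.get ⟨i, hi⟩ = τ.get ⟨i, lt_of_lt_of_le hi h⟩ := by
      intro i hi
      rw [← mem_cyl.1 hA1 i hi, mem_cyl.1 hA2 i (lt_of_lt_of_le hi h)]
    ext B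
    constructor
    · rintro ⟨_, hB⟩; exact hB
    · intro hB
      refine ⟨?_, hB⟩
      intro i
      rw [hpre i i.2]; exact mem_cyl.1 hB i (lt_of_lt_of_le i.2 h)
  · refine ⟨σ, ?_⟩
    have hpre : ∀ i (hi : i < τ.length), τ.get ⟨i, hi⟩ = σ.get ⟨i, lt_of_lt_of_le hi h⟩ := by
      intro i hi
      rw [← mem_cyl.1 hA2 i hi, mem_cyl.1 hA1 i (lt_of_lt_of_le hi h)]
    ext B
    constructor
    · rintro ⟨hB, _⟩; exact hB
    · intro hB
      refine ⟨hB, ?_⟩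
      intro i
      rw [hpre i i.2]; exact mem_cyl.1 hB i (lt_of_lt_of_le i.2 h)

lemma coord_eq_union (n : ℕ) (b : Bool) :
    {A : ℕ → Bool | A n = b} = ⋃ l ∈ {l : List Bool | l.length = n}, cyl (l ++ [b]) := by
  ext A
  simp only [Set.mem_setOf_eq, Set.mem_iUnion]
  constructor
  · intro hA
    refine ⟨List.ofFn (fun i : Fin n => A i), by simp, ?_⟩
    rw [mem_cyl]
    intro i hi
    have hlen : (List.ofFn (fun i : Fin n => A i)).length = n := by simp
    rcases lt_or_ge i n with h' | h'
    · have : ((List.ofFn (fun i : Fin n => A i)) ++ [b]).get ⟨i, hi⟩ =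
          (List.ofFn (fun i : Fin n => A i)).get ⟨i, by omega⟩ := by
        simp only [List.get_eq_getElem]
        exact List.getElem_append_left (by omega)
      rw [this]; simp
    · have hin : i = n := by
        simp at hi; omega
      subst hin
      have : ((List.ofFn (fun i : Fin i => A i)) ++ [b]).get ⟨i, hi⟩ = b := by
        simp only [List.get_eq_getElem]
        exact List.getElem_concat_length (by simp) _
      rw [this]; exact hA
  · rintro ⟨l, hl, hA⟩
    have hlen : (l ++ [b]).length = n + 1 := by simp [hl]
    have := mem_cyl.1 hA n (by omega)
    rw [this]
    simp only [List.get_eq_getElem]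
    exact List.getElem_concat_length (by omega) _

lemma generateFrom_cyls :
    (inferInstance : MeasurableSpace (ℕ → Bool)) = MeasurableSpace.generateFrom Cyls := by
  apply le_antisymm
  · rw [show (inferInstance : MeasurableSpace (ℕ → Bool)) = MeasurableSpace.pi from rfl,
      MeasurableSpace.pi]
    apply iSup_le
    intro n
    intro S hS
    obtain ⟨t, -, rfl⟩ := hS
    have : (fun A : ℕ → Bool => A n) ⁻¹' t = ⋃ b ∈ t, {A : ℕ → Bool | A n = b} := by
      ext A
      simp only [Set.mem_preimage, Set.mem_iUnion, Set.mem_setOf_eq]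
      constructor
      · intro h; exact ⟨A n, h, rfl⟩
      · rintro ⟨b, hb, h⟩; rw [h]; exact hb
    rw [this]
    refine MeasurableSet.biUnion t.to_countable fun b _ => ?_
    rw [coord_eq_union]
    refine MeasurableSet.biUnion (Set.to_countable _) fun l _ => ?_
    exact MeasurableSpace.measurableSet_generateFrom ⟨_, rfl⟩
  · apply MeasurableSpace.generateFrom_le
    rintro S ⟨σ, rfl⟩
    exact measurableSet_cyl σ

end
end StmtAux

-- continuing inside file (new section)
namespace Part2
open StmtAux

variable {μ ν : Measure (ℕ → Bool)}

lemma coin_univ (hμ : IsCoinMeasure μ) : μ Set.univ = 1 := by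
  have := hμ []
  simpa [cyl_nil] using this

lemma coin_unique (hμ : IsCoinMeasure μ) (hν : IsCoinMeasure ν) : μ = ν := by
  have hfin : IsFiniteMeasure μ := ⟨by rw [coin_univ hμ]; exact ENNReal.one_lt_top⟩
  exact MeasureTheory.ext_of_generate_finite Cyls generateFrom_cyls isPiSystem_cyls
    (by rintro s ⟨σ, rfl⟩; rw [hμ, hν]) (by rw [coin_univ hμ, coin_univ hν])

/-- Flip the bits in a finite set of positions. -/
def flip (s : Finset ℕ) (A : ℕ → Bool) : ℕ → Bool := fun n => if n ∈ s then !A n else A n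

lemma flip_flip (s : Finset ℕ) (A : ℕ → Bool) : flip s (flip s A) = A := by
  funext n; unfold flip; split <;> simp

lemma measurable_flip (s : Finset ℕ) : Measurable (flip s) := by
  apply measurable_pi_lambda
  intro n
  unfold flip
  split
  · exact Measurable.comp (measurable_from_top : Measurable fun b : Bool => !b) (measurable_pi_apply n)
  · exact measurable_pi_apply n

/-- The flip of a cylinder string. -/
def flipL (s : Finset ℕ) (σ : List Bool) : List Bool :=
  List.ofFn fun i : Fin σ.length => if (i : ℕ) ∈ s then !σ.get i else σ.get i

lemma flipL_get (s : Finset ℕ) (σ : List Bool) (i : ℕ) (h : i < σ.length)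
    (h' : i < (flipL s σ).length) :
    (flipL s σ).get ⟨i, h'⟩ = if i ∈ s then !σ.get ⟨i, h⟩ else σ.get ⟨i, h⟩ := by
  simp [flipL, List.get_ofFn]

lemma flip_preimage_cyl (s : Finset ℕ) (σ : List Bool) :
    flip s ⁻¹' cyl σ = cyl (flipL s σ) := by
  ext A
  simp only [Set.mem_preimage, mem_cyl]
  constructor
  · intro h i hi
    have hi' : i < σ.length := by simpa [flipL] using hi
    rw [flipL_get s σ i hi' hi]
    have h2 := h i hi'
    simp only [flip] at h2
    by_cases hm : i ∈ s
    · rw [if_pos hm] at h2 ⊢; rw [← h2]; simp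
    · rw [if_neg hm] at h2 ⊢; exact h2
  · intro h i hi
    have hi' : i < (flipL s σ).length := by simpa [flipL] using hi
    have h2 := h i hi'
    rw [flipL_get s σ i hi hi'] at h2
    simp only [flip]
    by_cases hm : i ∈ s
    · rw [if_pos hm] at h2 ⊢; rw [h2]; simp
    · rw [if_neg hm] at h2 ⊢; exact h2

lemma flip_preserving (hμ : IsCoinMeasure μ) (s : Finset ℕ) :
    MeasurePreserving (flip s) μ μ := by
  refine ⟨measurable_flip s, ?_⟩
  have hcoin : IsCoinMeasure (μ.map (flip s)) := by
    intro σ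
    rw [Measure.map_apply (measurable_flip s) (measurableSet_cyl σ), flip_preimage_cyl,
      hμ (flipL s σ)]
    simp [flipL]
  exact coin_unique hcoin hμ

/-! ### The transversal -/

def e0 : Setoid (ℕ → Bool) :=
  ⟨fun A B => {n | A n ≠ B n}.Finite, by
    constructor
    · intro A; simp
    · intro A B h; exact h.subset fun n hn => by simpa [ne_comm] using hn
    · intro A B C h1 h2
      refine (h1.union h2).subset fun n hn => ?_
      simp only [Set.mem_setOf_eq, Set.mem_union] at *
      by_contra hc
      push_neg at hc
      exact hn (hc.1.trans hc.2)⟩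

/-- The transversal: one chosen representative in each class. -/
def T : Set (ℕ → Bool) := Set.range fun q : Quotient e0 => q.out

lemma rep_equiv (A : ℕ → Bool) : e0.r (Quotient.mk e0 A).out A := Quotient.mk_out A

lemma T_unique {A B : ℕ → Bool} (hA : A ∈ T) (hB : B ∈ T) (h : e0.r A B) : A = B := by
  obtain ⟨q, rfl⟩ := hA
  obtain ⟨q', rfl⟩ := hB
  have : q = q' := by
    rw [← q.out_eq, ← q'.out_eq]
    exact Quotient.sound h
  rw [this]

lemma flip_mem_T (A : ℕ → Bool) : ∃ s : Finset ℕ, flip s A ∈ T := by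
  set B := (Quotient.mk e0 A).out with hB
  have hBT : B ∈ T := ⟨_, rfl⟩
  have hfin : {n | B n ≠ A n}.Finite := rep_equiv A
  refine ⟨hfin.toFinset, ?_⟩
  have : flip hfin.toFinset A = B := by
    funext n
    unfold flip
    split
    · rename_i h
      rw [Set.Finite.mem_toFinset] at h
      simp only [Set.mem_setOf_eq] at h
      cases hA : A n <;> cases hBn : B n <;> simp_all
    · rename_i h
      rw [Set.Finite.mem_toFinset] at h
      simp only [Set.mem_setOf_eq, not_not] at h
      exact h.symm
  rw [this]; exact hBT

lemma flip_inj_T {s t : Finset ℕ} {A : ℕ → Bool}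
    (hs : flip s A ∈ T) (ht : flip t A ∈ T) : s = t := by
  have hequiv : e0.r (flip s A) (flip t A) := by
    refine ((s.finite_toSet).union (t.finite_toSet)).subset fun n hn => ?_
    simp only [Set.mem_setOf_eq] at hn
    simp only [Set.mem_union, Finset.mem_coe]
    by_contra hc
    push_neg at hc
    apply hn
    unfold flip
    rw [if_neg hc.1, if_neg hc.2]
  have heq : flip s A = flip t A := T_unique hs ht hequiv
  ext n
  constructor
  · intro hns
    by_contra hnt
    have := congrFun heq n
    unfold flip at this
    rw [if_pos hns, if_neg hnt] at this
    cases h : A n <;> simp_all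
  · intro hnt
    by_contra hns
    have := congrFun heq n
    unfold flip at this
    rw [if_neg hns, if_pos hnt] at this
    cases h : A n <;> simp_all

theorem T_not_nullMeasurable (hμ : IsCoinMeasure μ) : ¬ NullMeasurableSet T μ := by
  intro hT
  set F : Finset ℕ → Set (ℕ → Bool) := fun s => flip s ⁻¹' T with hF
  have hnm : ∀ s, NullMeasurableSet (F s) μ :=
    fun s => hT.preimage (flip_preserving hμ s).quasiMeasurePreserving
  have hmeas : ∀ s, μ (F s) = μ T := fun s => (flip_preserving hμ s).measure_preimage hT
  have hdisj : Pairwise (Function.onFun (AEDisjoint μ) F) := by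
    intro s t hst
    refine Disjoint.aedisjoint ?_
    rw [Set.disjoint_left]
    intro A hAs hAt
    exact hst (flip_inj_T hAs hAt)
  have hcover : ⋃ s, F s = Set.univ := by
    rw [Set.eq_univ_iff_forall]
    intro A
    obtain ⟨s, hs⟩ := flip_mem_T A
    exact Set.mem_iUnion.2 ⟨s, hs⟩
  have h1 : (1 : ENNReal) = ∑' s : Finset ℕ, μ T := by
    rw [← coin_univ hμ, ← hcover, measure_iUnion₀ hdisj hnm]
    exact tsum_congr hmeas
  rcases eq_or_ne (μ T) 0 with h0 | h0
  · rw [h0, tsum_zero] at h1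
    exact one_ne_zero h1
  · rw [ENNReal.tsum_const_eq_top_of_ne_zero h0] at h1
    exact (ENNReal.one_ne_top) h1

end Part2


/-- There is a non-measurable class all of whose members are `Ψ₀`-autoreducible. -/
theorem stmt_1 (μ : Measure (ℕ → Bool)) (hμ : IsCoinMeasure μ) :
    ∃ (S₀ : Set (ℕ → Bool)) (Ψ₀ : ℕ → (ℕ → Bool) → Bool),
      ¬ NullMeasurableSet S₀ μ ∧ ∀ A ∈ S₀, AutoRed Ψ₀ A := by
  classical
  refine ⟨Part2.T, fun n B =>
    if ∃ A, A ∈ Part2.T ∧ drop A n = B ∧ A n = true then true else false,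
    Part2.T_not_nullMeasurable hμ, ?_⟩
  intro A hAT n
  cases hA : A n with
  | true =>
    exact (if_pos (⟨A, hAT, rfl, hA⟩ :
      ∃ A' ∈ Part2.T, drop A' n = drop A n ∧ A' n = true)).symm
  | false =>
    refine (if_neg ?_).symm
    rintro ⟨A', hA'T, hdrop, hA'⟩
    have hr : Part2.e0.r A' A := by
      refine (Set.finite_singleton n).subset fun m hm => ?_
      simp only [Set.mem_setOf_eq] at hm
      by_contra hmn
      simp only [Set.mem_singleton_iff] at hmn
      have := congrFun hdrop m
      simp only [drop, if_neg hmn] at this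
      exact hm this
    have := Part2.T_unique hA'T hAT hr
    rw [this, hA] at hA'
    exact Bool.false_ne_true hA'
end

section
/- A transversal of the finite symmetric difference equivalence relation on Cantor space (a set containing exactly one element of each equivalence class) is not Lebesgue measurable. -/
open MeasureTheory

lemma mem_cyl {A : ℕ → Bool} {σ : List Bool} :
    A ∈ cyl σ ↔ ∀ i, (h : i < σ.length) → A i = σ.get ⟨i, h⟩ :=
  ⟨fun H i h => H ⟨i, h⟩, fun H i => H i i.2⟩

lemma cyl_nil : cyl [] = Set.univ := by
  ext A; simp [cyl]

lemma measurableSet_cyl (σ : List Bool) : MeasurableSet (cyl σ) := by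
  have : cyl σ = ⋂ i : Fin σ.length, (fun A : ℕ → Bool => A i) ⁻¹' {σ.get i} := by
    ext A; simp [cyl]
  rw [this]
  exact MeasurableSet.iInter fun i => (measurable_pi_apply _) (measurableSet_singleton _)

lemma isPiSystem_cyl : IsPiSystem {s : Set (ℕ → Bool) | ∃ σ, s = cyl σ} := by
  rintro s ⟨σ, rfl⟩ t ⟨τ, rfl⟩ hne
  obtain ⟨B, hBσ, hBτ⟩ := hne
  rcases le_total σ.length τ.length with h | h
  · refine ⟨τ, ?_⟩
    have : cyl τ ⊆ cyl σ := by
      intro A hA i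
      have hi : (i : ℕ) < τ.length := lt_of_lt_of_le i.2 h
      have := mem_cyl.1 hA i hi
      rw [this, ← mem_cyl.1 hBτ i hi, mem_cyl.1 hBσ i i.2]
    rw [Set.inter_eq_right.2 this]
  · refine ⟨σ, ?_⟩
    have : cyl σ ⊆ cyl τ := by
      intro A hA i
      have hi : (i : ℕ) < σ.length := lt_of_lt_of_le i.2 h
      have := mem_cyl.1 hA i hi
      rw [this, ← mem_cyl.1 hBσ i hi, mem_cyl.1 hBτ i i.2]
    rw [Set.inter_eq_left.2 this]

lemma mem_cyl_res (A : ℕ → Bool) (k : ℕ) : A ∈ cyl (res A k) := by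
  intro i
  rw [List.get_eq_getElem]
  simp [res]

lemma generate_cyl :
    (inferInstance : MeasurableSpace (ℕ → Bool)) =
      MeasurableSpace.generateFrom {s | ∃ σ, s = cyl σ} := by
  refine le_antisymm ?_ (MeasurableSpace.generateFrom_le ?_)
  · rw [show (inferInstance : MeasurableSpace (ℕ → Bool)) = MeasurableSpace.pi from rfl,
      MeasurableSpace.pi]
    refine iSup_le fun i => ?_
    rintro s ⟨t, -, rfl⟩
    have key : ∀ b : Bool, MeasurableSet[MeasurableSpace.generateFrom {s | ∃ σ, s = cyl σ}]
        ((fun A : ℕ → Bool => A i) ⁻¹' {b}) := by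
      intro b
      have : (fun A : ℕ → Bool => A i) ⁻¹' {b} =
        ⋃ σ ∈ {σ : List Bool | σ.length = i + 1 ∧ σ.getD i (!b) = b}, cyl σ := by
        ext A
        constructor
        · intro hA
          refine Set.mem_biUnion (s := {σ : List Bool | σ.length = i + 1 ∧ σ.getD i (!b) = b})
            ⟨by simp [res], ?_⟩ (mem_cyl_res A (i+1))
          have hi : i < (res A (i+1)).length := by simp [res]
          rw [List.getD_eq_getElem _ _ hi]
          simp only [res, List.getElem_ofFn]
          exact hA
        · rintro hA
          obtain ⟨σ, ⟨hlen, hget⟩, hmem⟩ := Set.mem_iUnion₂.1 hA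
          have hi : i < σ.length := by omega
          have := mem_cyl.1 hmem i hi
          rw [List.getD_eq_getElem _ _ hi] at hget
          simp only [Set.mem_preimage, Set.mem_singleton_iff, this, List.get_eq_getElem, hget]
      rw [this]
      exact MeasurableSet.biUnion (Set.to_countable _)
        (fun σ _ => MeasurableSpace.measurableSet_generateFrom ⟨σ, rfl⟩)
    have : (fun A : ℕ → Bool => A i) ⁻¹' t = ⋃ b ∈ t, (fun A : ℕ → Bool => A i) ⁻¹' {b} := by
      ext A; simp
    rw [this]
    exact MeasurableSet.biUnion (Set.to_countable _) (fun b _ => key b)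
  · rintro s ⟨σ, rfl⟩
    exact measurableSet_cyl σ

def flipF (F : Finset ℕ) (A : ℕ → Bool) : ℕ → Bool :=
  fun n => if n ∈ F then !A n else A n

lemma measurable_flipF (F : Finset ℕ) : Measurable (flipF F) := by
  refine measurable_pi_iff.2 fun n => ?_
  by_cases h : n ∈ F <;> simp only [flipF, h, if_true, if_false]
  · exact (Measurable.of_discrete (f := Bool.not)).comp (measurable_pi_apply n)
  · exact measurable_pi_apply n

lemma flipF_invol (F : Finset ℕ) (A : ℕ → Bool) : flipF F (flipF F A) = A := by
  funext n; by_cases h : n ∈ F <;> simp [flipF, h]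

lemma flipF_preimage_cyl (F : Finset ℕ) (σ : List Bool) :
    flipF F ⁻¹' cyl σ =
      cyl (List.ofFn fun i : Fin σ.length => if (i : ℕ) ∈ F then !σ.get i else σ.get i) := by
  ext A
  simp only [Set.mem_preimage, mem_cyl, List.length_ofFn, List.get_eq_getElem,
    List.getElem_ofFn]
  constructor
  · intro H i h
    have := H i h
    by_cases hm : i ∈ F <;> simp only [flipF, hm, if_true, if_false] at this ⊢ <;>
      simp [← this]
  · intro H i h
    have := H i h
    by_cases hm : i ∈ F <;> simp only [flipF, hm, if_true, if_false] at this ⊢ <;>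
      simp [this]

lemma coin_univ {μ : Measure (ℕ → Bool)} (hμ : IsCoinMeasure μ) : μ Set.univ = 1 := by
  have := hμ []
  simpa [cyl_nil] using this

lemma flipF_measurePreserving {μ : Measure (ℕ → Bool)} (hμ : IsCoinMeasure μ)
    (F : Finset ℕ) : MeasurePreserving (flipF F) μ μ := by
  refine ⟨measurable_flipF F, ?_⟩
  have hfin : IsFiniteMeasure μ := ⟨by rw [coin_univ hμ]; exact ENNReal.one_lt_top⟩
  symm
  refine ext_of_generate_finite _ generate_cyl isPiSystem_cyl ?_ ?_
  · rintro s ⟨σ, rfl⟩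
    rw [Measure.map_apply (measurable_flipF F) (measurableSet_cyl σ),
      flipF_preimage_cyl, hμ, hμ]
    simp
  · rw [Measure.map_apply (measurable_flipF F) MeasurableSet.univ, Set.preimage_univ]
/-- A transversal of the finite symmetric difference equivalence relation on Cantor
space is not Lebesgue measurable. -/
theorem stmt_3 (μ : Measure (ℕ → Bool)) (hμ : IsCoinMeasure μ)
    (S : Set (ℕ → Bool))
    (htrans : ∀ A : ℕ → Bool, ∃! B, B ∈ S ∧ {n | A n ≠ B n}.Finite) :
    ¬ NullMeasurableSet S μ := by
  intro hS
  set T : Finset ℕ → Set (ℕ → Bool) := fun F => flipF F ⁻¹' S with hT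
  -- each flip image has the same measure
  have hmp : ∀ F : Finset ℕ, MeasurePreserving (flipF F) μ μ :=
    fun F => flipF_measurePreserving hμ F
  have hmeasT : ∀ F, NullMeasurableSet (T F) μ := fun F =>
    hS.preimage (hmp F).quasiMeasurePreserving
  have hμT : ∀ F, μ (T F) = μ S := by
    intro F
    have h1 : NullMeasurableSet S (Measure.map (flipF F) μ) := by
      rw [(hmp F).map_eq]; exact hS
    have := Measure.map_apply₀ (hmp F).measurable.aemeasurable h1
    rw [(hmp F).map_eq] at this
    exact this.symm
  -- finite difference with flip
  have hdiff : ∀ (F : Finset ℕ) (A : ℕ → Bool), {n | A n ≠ flipF F A n}.Finite := by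
    intro F A
    refine Set.Finite.subset F.finite_toSet fun n hn => ?_
    by_contra h
    simp only [Finset.mem_coe] at h
    exact hn (by simp [flipF, h])
  -- the translates cover everything
  have hcover : (⋃ F : Finset ℕ, T F) = Set.univ := by
    refine Set.eq_univ_of_forall fun A => ?_
    obtain ⟨B, ⟨hBS, hfin⟩, -⟩ := htrans A
    refine Set.mem_iUnion.2 ⟨hfin.toFinset, ?_⟩
    have : flipF hfin.toFinset A = B := by
      funext n
      by_cases h : A n = B n
      · simp [flipF, Set.Finite.mem_toFinset, h]
      · have : A n ≠ B n := h
        simp only [flipF, Set.Finite.mem_toFinset, Set.mem_setOf_eq, this, if_true]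
        revert this; cases A n <;> cases B n <;> simp
    simp only [hT, Set.mem_preimage, this]
    exact hBS
  -- pairwise disjoint
  have hdisj : Pairwise (Function.onFun Disjoint T) := by
    intro F G hFG
    simp only [Function.onFun, Set.disjoint_left]
    intro A hAF hAG
    obtain ⟨B, -, huniq⟩ := htrans A
    have e1 : flipF F A = B := huniq _ ⟨hAF, hdiff F A⟩
    have e2 : flipF G A = B := huniq _ ⟨hAG, hdiff G A⟩
    have e3 : flipF F A = flipF G A := e1.trans e2.symm
    have hn : ∃ n, ¬(n ∈ F ↔ n ∈ G) := by
      by_contra h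
      push_neg at h
      exact hFG (Finset.ext fun n => h n)
    obtain ⟨n, hn⟩ := hn
    have := congrFun e3 n
    by_cases h1 : n ∈ F <;> by_cases h2 : n ∈ G
    · exact hn (iff_of_true h1 h2)
    · simp only [flipF, h1, h2, if_true, if_false] at this
      revert this; cases A n <;> simp
    · simp only [flipF, h1, h2, if_true, if_false] at this
      revert this; cases A n <;> simp
    · exact hn (iff_of_false h1 h2)
  -- conclude
  have h1 : (1 : ENNReal) = ∑' F : Finset ℕ, μ (T F) := by
    rw [← measure_iUnion₀ (hdisj.mono fun F G h => h.aedisjoint) hmeasT, hcover, coin_univ hμ]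
  rw [tsum_congr hμT] at h1
  by_cases hz : μ S = 0
  · rw [hz, tsum_zero] at h1
    exact one_ne_zero h1
  · rw [ENNReal.tsum_const_eq_top_of_ne_zero hz] at h1
    exact ENNReal.one_ne_top h1
end

section
/- No 1-random set is uniformly introenumerable. -/
open MeasureTheory

namespace S18
open Denumerable Nat.Partrec Nat.Partrec.Code MeasureTheory

/-! ### The finite-set decoding as a list -/

def dl (y : ℕ) : List ℕ := raise' (ofNat (List ℕ) y) 0

lemma mem_dl {z y : ℕ} : z ∈ dl y ↔ z ∈ Dfin y := by
  have : z ∈ Denumerable.ofNat (Finset ℕ) y ↔ z ∈ dl y := by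
    show z ∈ Finset.map (Denumerable.eqv ℕ).symm.toEmbedding
        (Denumerable.raise'Finset (Denumerable.ofNat (List ℕ) y) 0) ↔ _
    rw [Finset.mem_map]
    constructor
    · rintro ⟨w, hw, rfl⟩
      simpa [Denumerable.raise'Finset, Denumerable.eqv, dl] using (show w ∈ raise' (ofNat (List ℕ) y) 0 from hw)
    · intro hz
      exact ⟨z, (by simpa [Denumerable.raise'Finset, Denumerable.eqv, dl] using hz : z ∈ raise' (ofNat (List ℕ) y) 0),
        by simp [Denumerable.eqv]⟩
  rw [← this]; exact Iff.rfl

/-! ### The stage-bounded enumeration operator -/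

def inW (cf : Code) (t z : ℕ) : Bool := (evaln t cf z).isSome

def chk (m' t : ℕ) (σ : List Bool) (y : ℕ) : Bool :=
  (dl y).all fun z => decide (m' ≤ z) && decide (z < m' + t) && σ.getD z false

def wit (cf : Code) (m' t : ℕ) (σ : List Bool) (x : ℕ) : Bool :=
  (List.range (t+1)).any fun y => inW cf t (Nat.pair x y) && chk m' t σ y

def ecnt (cf : Code) (m' t : ℕ) (σ : List Bool) : ℕ :=
  ((List.range m').filter fun x => wit cf m' t σ x).length

def PB (cf : Code) (k : ℕ) (σ : List Bool) : Bool :=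
  decide (2*k+4 ≤ σ.length) &&
  ((List.range (2*k+4)).all fun x =>
    σ.getD x false == wit cf (2*k+4) (σ.length - (2*k+4)) σ x) &&
  ((List.range (σ.length - (2*k+4))).all fun t =>
    decide (ecnt cf (2*k+4) t σ < ecnt cf (2*k+4) (σ.length - (2*k+4)) σ))

lemma chk_congr {m' t : ℕ} {σ σ' : List Bool}
    (h : ∀ z, m' ≤ z → z < m' + t → σ.getD z false = σ'.getD z false) (y : ℕ) :
    chk m' t σ y = chk m' t σ' y := by
  unfold chk
  congr 1
  funext z
  by_cases h1 : m' ≤ z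
  · by_cases h2 : z < m' + t
    · simp only [List.getD_eq_getElem?_getD] at h ⊢
      simp [h1, h2, h z h1 h2]
    · simp [h2]
  · simp [h1]

lemma wit_congr (cf : Code) {m' t : ℕ} {σ σ' : List Bool}
    (h : ∀ z, m' ≤ z → z < m' + t → σ.getD z false = σ'.getD z false) (x : ℕ) :
    wit cf m' t σ x = wit cf m' t σ' x := by
  unfold wit
  congr 1
  funext y
  rw [chk_congr h]

lemma ecnt_congr (cf : Code) {m' t : ℕ} {σ σ' : List Bool}
    (h : ∀ z, m' ≤ z → z < m' + t → σ.getD z false = σ'.getD z false) :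
    ecnt cf m' t σ = ecnt cf m' t σ' := by
  unfold ecnt
  rw [List.filter_congr (fun x _ => wit_congr cf h x)]

lemma ecnt_le (cf : Code) (m' t : ℕ) (σ : List Bool) : ecnt cf m' t σ ≤ m' := by
  have := List.length_filter_le (fun x => wit cf m' t σ x) (List.range m')
  simpa [ecnt] using this

/-! ### Basic facts about `res` and `cyl` -/

lemma res_length (A : ℕ → Bool) (n : ℕ) : (res A n).length = n := by simp [res]

lemma res_getD (A : ℕ → Bool) {n z : ℕ} (h : z < n) : (res A n).getD z false = A z := by
  simp [res, List.getD_eq_getElem?_getD, List.getElem?_ofFn, h]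

lemma mem_cyl_res (A : ℕ → Bool) (n : ℕ) : A ∈ cyl (res A n) := by
  intro i
  exact (List.get_ofFn (fun i : Fin n => A i) i).symm

lemma cyl_nil : cyl ([] : List Bool) = Set.univ := by
  ext B; simp [cyl]

lemma measurable_cyl (σ : List Bool) : MeasurableSet (cyl σ) := by
  have : cyl σ = ⋂ i : Fin σ.length, (fun B : ℕ → Bool => B (i : ℕ)) ⁻¹' {σ.get i} := by
    ext B; simp [cyl, Set.mem_iInter]
  rw [this]
  exact MeasurableSet.iInter fun i => (measurable_pi_apply (i : ℕ)) trivial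

lemma cyl_disjoint {σ τ : List Bool} (h1 : ¬ σ <+: τ) (h2 : ¬ τ <+: σ) :
    Disjoint (cyl σ) (cyl τ) := by
  have key : ∀ {σ τ : List Bool}, σ.length ≤ τ.length → ¬ σ <+: τ →
      ∃ i : ℕ, ∃ (hi : i < σ.length) (hi' : i < τ.length), σ.get ⟨i, hi⟩ ≠ τ.get ⟨i, hi'⟩ := by
    intro σ τ hlen hpre
    by_contra hc
    push_neg at hc
    apply hpre
    rw [List.prefix_iff_eq_take]
    apply List.ext_get
    · simp [hlen]
    · intro n h1' h2'
      have hn : n < σ.length := h1'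
      have hn' : n < τ.length := lt_of_lt_of_le hn hlen
      have hcc := hc n hn hn'
      simpa [List.get_eq_getElem, List.getElem_take] using hcc
  rcases le_total σ.length τ.length with hl | hl
  · obtain ⟨i, hi, hi', hne⟩ := key hl h1
    rw [Set.disjoint_left]
    intro B hB hB'
    exact hne ((hB ⟨i, hi⟩).symm.trans (hB' ⟨i, hi'⟩))
  · obtain ⟨i, hi, hi', hne⟩ := key hl h2
    rw [Set.disjoint_left]
    intro B hB hB'
    exact hne ((hB' ⟨i, hi⟩).symm.trans (hB ⟨i, hi'⟩))

end S18
set_option maxHeartbeats 1600000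
namespace S18
open Denumerable Nat.Partrec Nat.Partrec.Code MeasureTheory

section PrimrecHelpers

variable {α β : Type*} [Primcodable α] [Primcodable β]

lemma filter_eq_flatMap (l : List β) (p : β → Bool) :
    l.filter p = l.flatMap fun b => cond (p b) [b] [] := by
  induction l with
  | nil => rfl
  | cons b l ih =>
    rw [List.filter_cons, List.flatMap_cons, ← ih]
    cases p b <;> simp

lemma pr_list_filter {f : α → List β} {p : α → β → Bool}
    (hf : Primrec f) (hp : Primrec₂ p) : Primrec fun a => (f a).filter (p a) := by
  have : Primrec fun a => (f a).flatMap fun b => cond (p a b) [b] [] :=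
    Primrec.list_flatMap hf
      (Primrec.cond hp
        (Primrec.list_cons.comp Primrec.snd (Primrec.const []))
        (Primrec.const []))
  exact this.of_eq fun a => (filter_eq_flatMap _ _).symm

lemma any_eq_foldr (l : List β) (p : β → Bool) :
    l.any p = l.foldr (fun b r => p b || r) false := by
  induction l with
  | nil => rfl
  | cons b l ih => simp [ih]

lemma all_eq_foldr (l : List β) (p : β → Bool) :
    l.all p = l.foldr (fun b r => p b && r) true := by
  induction l with
  | nil => rfl
  | cons b l ih => simp [ih]

lemma pr_list_any {f : α → List β} {p : α → β → Bool}
    (hf : Primrec f) (hp : Primrec₂ p) : Primrec fun a => (f a).any (p a) := by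
  have : Primrec fun a => (f a).foldr (fun b r => p a b || r) false :=
    Primrec.list_foldr hf (Primrec.const false)
      ((Primrec.dom_bool₂ (· || ·)).comp₂
        (hp.comp₂ Primrec₂.left (Primrec.fst.comp₂ Primrec₂.right))
        (Primrec.snd.comp₂ Primrec₂.right))
  exact this.of_eq fun a => (any_eq_foldr _ _).symm

lemma pr_list_all {f : α → List β} {p : α → β → Bool}
    (hf : Primrec f) (hp : Primrec₂ p) : Primrec fun a => (f a).all (p a) := by
  have : Primrec fun a => (f a).foldr (fun b r => p a b && r) true :=
    Primrec.list_foldr hf (Primrec.const true)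
      ((Primrec.dom_bool₂ (· && ·)).comp₂
        (hp.comp₂ Primrec₂.left (Primrec.fst.comp₂ Primrec₂.right))
        (Primrec.snd.comp₂ Primrec₂.right))
  exact this.of_eq fun a => (all_eq_foldr _ _).symm

end PrimrecHelpers

lemma raise'_formula : ∀ (l : List ℕ) (n : ℕ),
    raise' l n = (List.range l.length).map
      (fun i => n + i + ((List.range (i+1)).map fun j => l.getD j 0).foldr (·+·) 0)
  | [], _ => by simp [raise']
  | m :: l, n => by
    have key : ∀ i : ℕ,
        ((List.range (i+2)).map fun j => (m::l).getD j 0).foldr (·+·) 0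
          = m + ((List.range (i+1)).map fun j => l.getD j 0).foldr (·+·) 0 := by
      intro i
      have : List.range (i+2) = 0 :: (List.range (i+1)).map Nat.succ :=
        List.range_succ_eq_map (n := i+1)
      rw [this]
      simp [List.map_map, Function.comp_def]
    rw [raise', raise'_formula l (m+n+1)]
    rw [show (m::l).length = l.length + 1 from rfl, List.range_succ_eq_map,
      List.map_cons, List.map_map]
    congr 1
    · simp [List.range_succ]; omega
    · apply List.map_congr_left
      intro i _
      simp only [Function.comp_def, Nat.succ_eq_add_one]
      rw [show i + 1 + 1 = i + 2 from rfl, key i]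
      omega

lemma pr_dl : Primrec dl := by
  have hL : Primrec fun y => ofNat (List ℕ) y := Primrec.ofNat _
  -- inner sum as a function of (y, i)
  have hgetD : Primrec fun q : (ℕ × ℕ) × ℕ => (ofNat (List ℕ) q.1.1).getD q.2 0 :=
    (Primrec.list_getD 0).comp (hL.comp (Primrec.fst.comp Primrec.fst)) Primrec.snd
  have hmap : Primrec fun p : ℕ × ℕ =>
      (List.range (p.2+1)).map fun j => (ofNat (List ℕ) p.1).getD j 0 :=
    Primrec.list_map (Primrec.list_range.comp (Primrec.succ.comp Primrec.snd)) hgetD.to₂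
  have hsum : Primrec fun p : ℕ × ℕ =>
      ((List.range (p.2+1)).map fun j => (ofNat (List ℕ) p.1).getD j 0).foldr (·+·) 0 :=
    Primrec.list_foldr hmap (Primrec.const 0)
      (Primrec.nat_add.comp (Primrec.fst.comp Primrec.snd)
        (Primrec.snd.comp Primrec.snd)).to₂
  have hbody : Primrec₂ fun (y : ℕ) (i : ℕ) =>
      i + ((List.range (i+1)).map fun j => (ofNat (List ℕ) y).getD j 0).foldr (·+·) 0 :=
    (Primrec.nat_add.comp Primrec.snd hsum).to₂
  have : Primrec fun y =>
      (List.range (ofNat (List ℕ) y).length).map fun i =>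
        i + ((List.range (i+1)).map fun j => (ofNat (List ℕ) y).getD j 0).foldr (·+·) 0 :=
    Primrec.list_map (Primrec.list_range.comp (Primrec.list_length.comp hL)) hbody
  refine this.of_eq fun y => ?_
  rw [dl, raise'_formula]
  apply List.map_congr_left
  intro i _
  omega

lemma pr_inW (cf : Code) : Primrec₂ (inW cf) := by
  have : Primrec fun p : ℕ × ℕ => evaln p.1 cf p.2 :=
    primrec_evaln.comp (Primrec.pair (Primrec.pair Primrec.fst (Primrec.const cf)) Primrec.snd)
  exact Primrec.option_isSome.comp this

lemma pr_PB (cf : Code) : Primrec fun p : ℕ × List Bool => PB cf p.1 p.2 := by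
  -- q = ((m', t), σ) bundled states
  have hchk : Primrec fun q : ((ℕ × ℕ) × List Bool) × ℕ =>
      chk q.1.1.1 q.1.1.2 q.1.2 q.2 := by
    unfold chk
    apply pr_list_all (pr_dl.comp Primrec.snd)
    have hm : Primrec fun q : (((ℕ × ℕ) × List Bool) × ℕ) × ℕ => q.1.1.1.1 :=
      Primrec.fst.comp (Primrec.fst.comp (Primrec.fst.comp Primrec.fst))
    have ht : Primrec fun q : (((ℕ × ℕ) × List Bool) × ℕ) × ℕ => q.1.1.1.2 :=
      Primrec.snd.comp (Primrec.fst.comp (Primrec.fst.comp Primrec.fst))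
    have hσ : Primrec fun q : (((ℕ × ℕ) × List Bool) × ℕ) × ℕ => q.1.1.2 :=
      Primrec.snd.comp (Primrec.fst.comp Primrec.fst)
    have hz : Primrec fun q : (((ℕ × ℕ) × List Bool) × ℕ) × ℕ => q.2 := Primrec.snd
    exact Primrec.to₂ <|
      (Primrec.dom_bool₂ (· && ·)).comp
        ((Primrec.dom_bool₂ (· && ·)).comp (Primrec.nat_le.comp hm hz).decide
          (Primrec.nat_lt.comp hz (Primrec.nat_add.comp hm ht)).decide)
        ((Primrec.list_getD false).comp hσ hz)
  have hwit : Primrec fun q : ((ℕ × ℕ) × List Bool) × ℕ =>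
      wit cf q.1.1.1 q.1.1.2 q.1.2 q.2 := by
    unfold wit
    apply pr_list_any
      (Primrec.list_range.comp (Primrec.succ.comp
        (Primrec.snd.comp (Primrec.fst.comp Primrec.fst))))
    have hm : Primrec fun q : (((ℕ × ℕ) × List Bool) × ℕ) × ℕ => q.1.1.1.1 :=
      Primrec.fst.comp (Primrec.fst.comp (Primrec.fst.comp Primrec.fst))
    have ht : Primrec fun q : (((ℕ × ℕ) × List Bool) × ℕ) × ℕ => q.1.1.1.2 :=
      Primrec.snd.comp (Primrec.fst.comp (Primrec.fst.comp Primrec.fst))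
    have hσ : Primrec fun q : (((ℕ × ℕ) × List Bool) × ℕ) × ℕ => q.1.1.2 :=
      Primrec.snd.comp (Primrec.fst.comp Primrec.fst)
    have hx : Primrec fun q : (((ℕ × ℕ) × List Bool) × ℕ) × ℕ => q.1.2 :=
      Primrec.snd.comp Primrec.fst
    have hy : Primrec fun q : (((ℕ × ℕ) × List Bool) × ℕ) × ℕ => q.2 := Primrec.snd
    exact Primrec.to₂ <|
      (Primrec.dom_bool₂ (· && ·)).comp
        ((pr_inW cf).comp ht (Primrec₂.natPair.comp hx hy))
        (hchk.comp (Primrec.pair (Primrec.pair (Primrec.pair hm ht) hσ) hy))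
  have hecnt : Primrec fun q : (ℕ × ℕ) × List Bool =>
      ecnt cf q.1.1 q.1.2 q.2 := by
    unfold ecnt
    apply Primrec.list_length.comp
    apply pr_list_filter (Primrec.list_range.comp (Primrec.fst.comp Primrec.fst))
    exact Primrec.to₂ (hwit.comp Primrec.id)
  -- now PB
  unfold PB
  have hk : Primrec fun p : ℕ × List Bool => 2 * p.1 + 4 :=
    Primrec.succ.comp (Primrec.succ.comp (Primrec.succ.comp (Primrec.succ.comp
      (Primrec.nat_double.comp Primrec.fst))))
  have hlen : Primrec fun p : ℕ × List Bool => p.2.length :=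
    Primrec.list_length.comp Primrec.snd
  have hn : Primrec fun p : ℕ × List Bool => p.2.length - (2 * p.1 + 4) :=
    Primrec.nat_sub.comp hlen hk
  have h1 : Primrec fun p : ℕ × List Bool => decide (2 * p.1 + 4 ≤ p.2.length) :=
    (Primrec.nat_le.comp hk hlen).decide
  have h2 : Primrec fun p : ℕ × List Bool =>
      (List.range (2 * p.1 + 4)).all fun x =>
        p.2.getD x false == wit cf (2 * p.1 + 4) (p.2.length - (2 * p.1 + 4)) p.2 x := by
    apply pr_list_all (Primrec.list_range.comp hk)
    exact Primrec.to₂ <|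
      Primrec.beq.comp
        ((Primrec.list_getD false).comp (Primrec.snd.comp Primrec.fst) Primrec.snd)
        (hwit.comp (Primrec.pair (Primrec.pair
          (Primrec.pair (hk.comp Primrec.fst) (hn.comp Primrec.fst))
          (Primrec.snd.comp Primrec.fst)) Primrec.snd))
  have h3 : Primrec fun p : ℕ × List Bool =>
      (List.range (p.2.length - (2 * p.1 + 4))).all fun t =>
        decide (ecnt cf (2 * p.1 + 4) t p.2
          < ecnt cf (2 * p.1 + 4) (p.2.length - (2 * p.1 + 4)) p.2) := by
    apply pr_list_all (Primrec.list_range.comp hn)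
    exact Primrec.to₂ <|
      (Primrec.nat_lt.comp
        (hecnt.comp (Primrec.pair
          (Primrec.pair (hk.comp Primrec.fst) Primrec.snd)
          (Primrec.snd.comp Primrec.fst)))
        (hecnt.comp (Primrec.pair
          (Primrec.pair (hk.comp Primrec.fst) (hn.comp Primrec.fst))
          (Primrec.snd.comp Primrec.fst)))).decide
  exact ((Primrec.dom_bool₂ (· && ·)).comp
    ((Primrec.dom_bool₂ (· && ·)).comp h1 h2) h3)

lemma ce_PB (cf : Code) : CE {p : ℕ × List Bool | PB cf p.1 p.2 = true} := by
  have hcp : ComputablePred fun p : ℕ × List Bool => PB cf p.1 p.2 = true :=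
    ComputablePred.computable_iff.2 ⟨_, (pr_PB cf).to_comp, rfl⟩
  have hre := hcp.to_re
  refine ⟨fun p => (Part.assert (PB cf p.1 p.2 = true) fun _ => Part.some ()).map
    fun _ => 0, Partrec.map hre ((Computable.const 0).comp Computable.fst).to₂, ?_⟩
  ext p
  simp [PFun.Dom, Part.dom_iff_mem]
end S18
namespace S18
open Denumerable Nat.Partrec Nat.Partrec.Code MeasureTheory
open scoped ENNReal

def Aset (cf : Code) (m' c : ℕ) : Set (List Bool) :=
  {σ | m' ≤ σ.length ∧ (∀ x < m', σ.getD x false = wit cf m' (σ.length - m') σ x) ∧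
      (∀ t < σ.length - m', ecnt cf m' t σ < ecnt cf m' (σ.length - m') σ) ∧
      ecnt cf m' (σ.length - m') σ = c}

lemma PB_mem_Aset (cf : Code) (k : ℕ) {σ : List Bool} (h : PB cf k σ = true) :
    σ ∈ Aset cf (2*k+4) (ecnt cf (2*k+4) (σ.length - (2*k+4)) σ) := by
  rw [PB, Bool.and_eq_true, Bool.and_eq_true] at h
  obtain ⟨⟨h1, h2⟩, h3⟩ := h
  refine ⟨of_decide_eq_true h1, ?_, ?_, rfl⟩
  · intro x hx
    have := List.all_eq_true.1 h2 x (List.mem_range.2 hx)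
    exact beq_iff_eq.1 this
  · intro t ht
    have := List.all_eq_true.1 h3 t (List.mem_range.2 ht)
    exact of_decide_eq_true this

lemma getD_drop (σ : List Bool) (m' i : ℕ) :
    (σ.drop m').getD i false = σ.getD (m' + i) false := by
  rw [List.getD_eq_getElem?_getD, List.getD_eq_getElem?_getD, List.getElem?_drop]

lemma Aset_prefix_eq {cf : Code} {m' c : ℕ} {σ σ' : List Bool}
    (hσ : σ ∈ Aset cf m' c) (hσ' : σ' ∈ Aset cf m' c)
    (hpre : σ.drop m' <+: σ'.drop m') : σ = σ' := by
  obtain ⟨hl, hbit, hmin, hcnt⟩ := hσ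
  obtain ⟨hl', hbit', hmin', hcnt'⟩ := hσ'
  set τ := σ.drop m' with hτ
  set τ' := σ'.drop m' with hτ'
  have hlτ : τ.length = σ.length - m' := by simp [hτ]
  have hlτ' : τ'.length = σ'.length - m' := by simp [hτ']
  have hagree : ∀ z, m' ≤ z → z < m' + τ.length → σ.getD z false = σ'.getD z false := by
    intro z hz1 hz2
    obtain ⟨i, rfl⟩ : ∃ i, z = m' + i := ⟨z - m', by omega⟩
    have hi : i < τ.length := by omega
    obtain ⟨r, hr⟩ := hpre
    calc σ.getD (m' + i) false = τ.getD i false := (getD_drop σ m' i).symm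
      _ = τ'.getD i false := by rw [← hr, List.getD_append _ _ _ _ hi]
      _ = σ'.getD (m' + i) false := getD_drop σ' m' i
  have hlen : τ.length = τ'.length := by
    by_contra hne
    have hlt : τ.length < τ'.length := lt_of_le_of_ne hpre.length_le hne
    have h1 : ecnt cf m' τ.length σ' = ecnt cf m' τ.length σ :=
      (ecnt_congr cf hagree).symm
    rw [← hlτ] at hcnt
    rw [← hlτ'] at hcnt' hmin'
    have h3 := hmin' τ.length hlt
    omega
  have hττ' : τ = τ' := hpre.eq_of_length hlen
  have hslen : σ.length = σ'.length := by omega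
  apply List.ext_getElem?
  intro n
  rcases lt_or_ge n σ.length with hn | hn
  · have hn' : n < σ'.length := by omega
    rw [List.getElem?_eq_getElem hn, List.getElem?_eq_getElem hn']
    rcases lt_or_ge n m' with hm | hm
    · have e1 : σ[n] = σ.getD n false := (List.getD_eq_getElem σ false hn).symm
      have e2 : σ'[n] = σ'.getD n false := (List.getD_eq_getElem σ' false hn').symm
      have ht : σ'.length - m' = σ.length - m' := by omega
      have heq : σ.getD n false = σ'.getD n false := by
        rw [hbit n hm, hbit' n hm, ht]
        apply wit_congr cf
        intro z hz1 hz2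
        exact hagree z hz1 (by omega)
      rw [e1, e2, heq]
    · have e1 : σ[n] = σ.getD n false := (List.getD_eq_getElem σ false hn).symm
      have e2 : σ'[n] = σ'.getD n false := (List.getD_eq_getElem σ' false hn').symm
      have hb : n < m' + τ.length := by omega
      rw [e1, e2, hagree n hm hb]
  · rw [List.getElem?_eq_none hn, List.getElem?_eq_none (by omega)]

lemma tsum_Aset_le (μ : Measure (ℕ → Bool)) (hμ : IsCoinMeasure μ) (cf : Code)
    (m' c : ℕ) :
    (∑' σ : Aset cf m' c, (2⁻¹ : ℝ≥0∞) ^ (σ : List Bool).length)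
      ≤ if c ≤ m' then (2⁻¹ : ℝ≥0∞) ^ m' else 0 := by
  rcases le_or_gt c m' with hc | hc
  · rw [if_pos hc]
    have huniv : μ Set.univ = 1 := by
      have := hμ []
      rw [cyl_nil] at this
      simpa using this
    have hterm : ∀ σ : Aset cf m' c,
        (2⁻¹ : ℝ≥0∞) ^ (σ : List Bool).length
          = (2⁻¹ : ℝ≥0∞) ^ m' * μ (cyl ((σ : List Bool).drop m')) := by
      rintro ⟨σ, hσ⟩
      have hl : m' ≤ σ.length := hσ.1
      rw [hμ ((σ : List Bool).drop m')]
      simp only []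
      rw [← pow_add]
      congr 1
      rw [List.length_drop]
      omega
    calc (∑' σ : Aset cf m' c, (2⁻¹ : ℝ≥0∞) ^ (σ : List Bool).length)
        = ∑' σ : Aset cf m' c, (2⁻¹ : ℝ≥0∞) ^ m' * μ (cyl ((σ : List Bool).drop m')) :=
          tsum_congr hterm
      _ = (2⁻¹ : ℝ≥0∞) ^ m' * ∑' σ : Aset cf m' c, μ (cyl ((σ : List Bool).drop m')) :=
          ENNReal.tsum_mul_left
      _ = (2⁻¹ : ℝ≥0∞) ^ m' * μ (⋃ σ : Aset cf m' c, cyl ((σ : List Bool).drop m')) := by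
          rw [measure_iUnion ?_ (fun σ => measurable_cyl _)]
          intro i j hij
          have hne : (i : List Bool) ≠ (j : List Bool) := fun h => hij (Subtype.ext h)
          apply cyl_disjoint
          · intro hpre
            exact hne (Aset_prefix_eq i.2 j.2 hpre)
          · intro hpre
            exact hne (Aset_prefix_eq j.2 i.2 hpre).symm
      _ ≤ (2⁻¹ : ℝ≥0∞) ^ m' * 1 := by
          gcongr
          rw [← huniv]
          exact measure_mono (Set.subset_univ _)
      _ = (2⁻¹ : ℝ≥0∞) ^ m' := mul_one _
  · rw [if_neg (not_le.2 hc)]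
    have : Aset cf m' c = ∅ := by
      ext σ
      simp only [Aset, Set.mem_setOf_eq, Set.mem_empty_iff_false, iff_false]
      rintro ⟨-, -, -, hcnt⟩
      have := ecnt_le cf m' (σ.length - m') σ
      omega
    rw [this]
    simp

lemma nat_ineq : ∀ k : ℕ, 2*k+5 ≤ 2^(k+4) := by
  intro k
  induction k with
  | zero => norm_num
  | succ n ih =>
    have h2 : (2:ℕ) ≤ 2^(n+4) := by
      calc (2:ℕ) = 2^1 := rfl
        _ ≤ 2^(n+4) := Nat.pow_le_pow_right (by norm_num) (by omega)
    rw [show n+1+4 = (n+4)+1 from by omega, pow_succ]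
    omega

lemma final_num (k : ℕ) : ((2*k+4+1 : ℕ) : ℝ≥0∞) * 2⁻¹^(2*k+4) ≤ 2⁻¹^k := by
  have h1 : ((2*k+4+1 : ℕ) : ℝ≥0∞) ≤ 2^(k+4) := by
    calc ((2*k+4+1 : ℕ) : ℝ≥0∞) ≤ ((2^(k+4) : ℕ) : ℝ≥0∞) := by
          exact_mod_cast nat_ineq k
      _ = 2^(k+4) := by push_cast; ring
  calc ((2*k+4+1 : ℕ) : ℝ≥0∞) * 2⁻¹^(2*k+4)
      ≤ 2^(k+4) * 2⁻¹^(2*k+4) := by gcongr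
    _ = 2^(k+4) * (2⁻¹^(k+4) * 2⁻¹^k) := by rw [← pow_add]; ring_nf
    _ = (2^(k+4) * 2⁻¹^(k+4)) * 2⁻¹^k := by ring
    _ = 1 * 2⁻¹^k := by
        rw [← mul_pow, ENNReal.mul_inv_cancel two_ne_zero ENNReal.ofNat_ne_top, one_pow]
    _ = 2⁻¹^k := one_mul _

lemma meas_le (μ : Measure (ℕ → Bool)) (hμ : IsCoinMeasure μ) (cf : Code) (k : ℕ) :
    μ (testSet {p : ℕ × List Bool | PB cf p.1 p.2 = true} k) ≤ 2⁻¹ ^ k := by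
  set m' := 2*k+4 with hm'
  set S : Set (List Bool) := {σ | PB cf k σ = true} with hS
  have hSS : {σ | (k, σ) ∈ {p : ℕ × List Bool | PB cf p.1 p.2 = true}} = S := rfl
  have h1 : μ (testSet {p : ℕ × List Bool | PB cf p.1 p.2 = true} k)
      ≤ ∑' σ : S, μ (cyl (σ : List Bool)) := by
    rw [testSet, hSS]
    exact measure_biUnion_le μ (Set.to_countable S) _
  have h2 : (∑' σ : S, μ (cyl (σ : List Bool)))
      = ∑' σ : List Bool, S.indicator (fun σ => (2⁻¹:ℝ≥0∞)^σ.length) σ := by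
    rw [← tsum_subtype]
    exact tsum_congr fun σ => hμ _
  have h3 : ∀ σ : List Bool, S.indicator (fun σ => (2⁻¹:ℝ≥0∞)^σ.length) σ
      ≤ ∑' c : ℕ, (Aset cf m' c).indicator (fun σ => (2⁻¹:ℝ≥0∞)^σ.length) σ := by
    intro σ
    rcases Set.indicator_eq_zero_or_self S (fun σ => (2⁻¹:ℝ≥0∞)^σ.length) σ with h | h
    · rw [h]; exact zero_le
    rw [h]
    by_cases hσ : σ ∈ S
    · have hmem := PB_mem_Aset cf k hσ
      rw [← hm'] at hmem
      have hrw : (2⁻¹:ℝ≥0∞)^σ.length = (Aset cf m' (ecnt cf m' (σ.length - m') σ)).indicator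
          (fun σ => (2⁻¹:ℝ≥0∞)^σ.length) σ :=
        (Set.indicator_of_mem hmem (fun σ : List Bool => (2⁻¹:ℝ≥0∞) ^ σ.length)).symm
      rw [hrw]
      exact ENNReal.le_tsum _
    · rw [Set.indicator_of_notMem hσ] at h
      rw [← h]
      exact zero_le
  calc μ (testSet {p : ℕ × List Bool | PB cf p.1 p.2 = true} k)
      ≤ ∑' σ : List Bool, S.indicator (fun σ => (2⁻¹:ℝ≥0∞)^σ.length) σ := h1.trans h2.le
    _ ≤ ∑' σ : List Bool, ∑' c : ℕ,
          (Aset cf m' c).indicator (fun σ => (2⁻¹:ℝ≥0∞)^σ.length) σ :=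
        ENNReal.tsum_le_tsum h3
    _ = ∑' c : ℕ, ∑' σ : List Bool,
          (Aset cf m' c).indicator (fun σ => (2⁻¹:ℝ≥0∞)^σ.length) σ := ENNReal.tsum_comm
    _ = ∑' c : ℕ, ∑' σ : Aset cf m' c, (2⁻¹:ℝ≥0∞)^(σ : List Bool).length := by
        refine tsum_congr fun c => ?_
        exact (tsum_subtype (Aset cf m' c) fun l => (2⁻¹:ℝ≥0∞)^l.length).symm
    _ ≤ ∑' c : ℕ, if c ≤ m' then (2⁻¹ : ℝ≥0∞) ^ m' else 0 :=
        ENNReal.tsum_le_tsum fun c => tsum_Aset_le μ hμ cf m' c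
    _ = ∑ c ∈ Finset.range (m'+1), if c ≤ m' then (2⁻¹ : ℝ≥0∞) ^ m' else 0 := by
        apply tsum_eq_sum
        intro c hc
        have hnc : ¬ c ≤ m' := by simpa [Nat.lt_succ_iff] using hc
        rw [if_neg hnc]
    _ = ((m'+1 : ℕ) : ℝ≥0∞) * (2⁻¹ : ℝ≥0∞) ^ m' := by
        rw [Finset.sum_congr rfl fun c hc => if_pos (by simpa [Nat.lt_succ_iff] using hc)]
        rw [Finset.sum_const, Finset.card_range, nsmul_eq_mul]
    _ ≤ 2⁻¹ ^ k := final_num k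
end S18
namespace S18
open Denumerable Nat.Partrec Nat.Partrec.Code MeasureTheory
open scoped ENNReal

lemma bool_ext {a b : Bool} (h : a = true ↔ b = true) : a = b := by
  cases a <;> cases b <;> simp_all

lemma le_foldr_max : ∀ (l : List ℕ) (z : ℕ), z ∈ l → z ≤ l.foldr max 0
  | [], _, h => by simp at h
  | m :: l, z, h => by
    rcases List.mem_cons.1 h with rfl | h
    · exact le_max_left _ _
    · exact le_trans (le_foldr_max l z h) (le_max_right _ _)

lemma wit_mono (cf : Code) (A : ℕ → Bool) {m' t t' x : ℕ} (htt : t ≤ t')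
    (h : wit cf m' t (res A (m'+t)) x = true) : wit cf m' t' (res A (m'+t')) x = true := by
  simp only [wit, List.any_eq_true, List.mem_range] at h ⊢
  obtain ⟨y, hy, hconj⟩ := h
  rw [Bool.and_eq_true] at hconj
  obtain ⟨hin, hchk⟩ := hconj
  refine ⟨y, by omega, ?_⟩
  rw [Bool.and_eq_true]
  constructor
  · rw [inW, Option.isSome_iff_exists] at hin ⊢
    obtain ⟨v, hv⟩ := hin
    exact ⟨v, evaln_mono htt hv⟩
  · rw [chk, List.all_eq_true] at hchk ⊢
    intro z hz
    have h3 := hchk z hz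
    rw [Bool.and_eq_true, Bool.and_eq_true] at h3
    rw [Bool.and_eq_true, Bool.and_eq_true]
    obtain ⟨⟨h1, h2⟩, h4⟩ := h3
    have h2' := of_decide_eq_true h2
    rw [res_getD A h2'] at h4
    refine ⟨⟨h1, decide_eq_true (by omega)⟩, ?_⟩
    rw [res_getD A (by omega)]
    exact h4

lemma capture (cf : Code) (f : ℕ →. ℕ) (hcf : cf.eval = f)
    (A : ℕ → Bool) (hInf : (toSet A).Infinite)
    (hW : ∀ Y ⊆ toSet A, Y.Infinite → enumOp f.Dom Y = toSet A)
    (k : ℕ) : ∃ σ, PB cf k σ = true ∧ A ∈ cyl σ := by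
  set m' := 2*k+4 with hm'
  set Y : Set ℕ := toSet A ∩ {z | m' ≤ z} with hY
  have hY_sub : Y ⊆ toSet A := Set.inter_subset_left
  have hY_inf : Y.Infinite := by
    have he : Y = toSet A \ {z | z < m'} := by
      ext z; simp [hY, not_lt, Set.mem_diff]
    rw [he]
    exact hInf.diff (Set.finite_Iio (m' : ℕ))
  have hYX : enumOp f.Dom Y = toSet A := hW Y hY_sub hY_inf
  -- the approximations
  set w : ℕ → ℕ → Bool := fun t x => wit cf m' t (res A (m'+t)) x with hw
  -- soundness
  have hsound : ∀ t x, x < m' → w t x = true → A x = true := by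
    intro t x hx hwt
    rw [hw] at hwt
    simp only [wit, List.any_eq_true, List.mem_range] at hwt
    obtain ⟨y, hy, hconj⟩ := hwt
    rw [Bool.and_eq_true] at hconj
    obtain ⟨hin, hchk⟩ := hconj
    have hxY : x ∈ enumOp f.Dom Y := by
      refine ⟨y, ?_, ?_⟩
      · rw [inW, Option.isSome_iff_exists] at hin
        obtain ⟨v, hv⟩ := hin
        have : v ∈ cf.eval (Nat.pair x y) := evaln_sound hv
        rw [hcf] at this
        exact (PFun.mem_dom f _).2 ⟨v, this⟩
      · intro z hz
        rw [← mem_dl] at hz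
        have := List.all_eq_true.1 hchk z hz
        rw [Bool.and_eq_true, Bool.and_eq_true] at this
        obtain ⟨⟨h1, h2⟩, h3⟩ := this
        have h1' := of_decide_eq_true h1
        have h2' := of_decide_eq_true h2
        rw [res_getD A h2'] at h3
        exact ⟨h3, h1'⟩
    rw [hYX] at hxY
    exact hxY
  -- completeness
  have hcomp : ∀ x, x < m' → A x = true → ∃ t, w t x = true := by
    intro x hx hA
    have hxE : x ∈ enumOp f.Dom Y := by rw [hYX]; exact hA
    obtain ⟨y, hy, hsub⟩ := hxE
    obtain ⟨v, hv⟩ := (PFun.mem_dom f _).1 hy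
    rw [← hcf] at hv
    obtain ⟨s, hs⟩ := evaln_complete.1 hv
    set b := (dl y).foldr max 0 with hb
    refine ⟨s + y + b + 1, ?_⟩
    rw [hw]
    simp only [wit, List.any_eq_true, List.mem_range]
    refine ⟨y, by omega, ?_⟩
    rw [Bool.and_eq_true]
    constructor
    · rw [inW, Option.isSome_iff_exists]
      exact ⟨v, evaln_mono (by omega) hs⟩
    · rw [chk, List.all_eq_true]
      intro z hz
      have hzb : z ≤ b := le_foldr_max _ _ hz
      rw [mem_dl] at hz
      have hzY := hsub hz
      obtain ⟨hzA, hzm⟩ := hzY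
      rw [Bool.and_eq_true, Bool.and_eq_true]
      refine ⟨⟨decide_eq_true hzm, decide_eq_true (by omega)⟩, ?_⟩
      rw [res_getD A (by omega)]
      exact hzA
  -- e t and its cap
  set e : ℕ → ℕ := fun t => ecnt cf m' t (res A (m'+t)) with he
  set cstar := ((List.range m').filter (fun x => A x)).length with hcstar
  have hfilter_eq : ∀ t, (List.range m').filter (fun x => w t x)
      = (List.range m').filter (fun x => w t x && decide (x < m')) := by
    intro t
    apply List.filter_congr
    intro x hx
    have : x < m' := List.mem_range.1 hx
    simp [this]
  have hcap : ∀ t, e t ≤ cstar := by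
    intro t
    rw [he, hcstar]
    show ((List.range m').filter (fun x => w t x)).length ≤ _
    rw [hfilter_eq t]
    apply List.Sublist.length_le
    apply List.monotone_filter_right
    intro x hx
    rw [Bool.and_eq_true] at hx
    exact hsound t x (of_decide_eq_true hx.2) hx.1
  -- a stage where everything has appeared
  have hstage : ∀ M, M ≤ m' → ∃ T, ∀ x < M, A x = true → w T x = true := by
    intro M
    induction M with
    | zero => exact fun _ => ⟨0, by omega⟩
    | succ n ih =>
      intro hn
      obtain ⟨T, hT⟩ := ih (by omega)
      by_cases hA : A n = true
      · obtain ⟨t, ht⟩ := hcomp n (by omega) hA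
        refine ⟨max T t, ?_⟩
        intro x hx hAx
        rcases lt_or_ge x n with h | h
        · exact wit_mono cf A (le_max_left T t) (hT x h hAx)
        · have : x = n := by omega
          subst this
          exact wit_mono cf A (le_max_right T t) ht
      · refine ⟨T, ?_⟩
        intro x hx hAx
        rcases lt_or_ge x n with h | h
        · exact hT x h hAx
        · have : x = n := by omega
          subst this
          exact absurd hAx hA
  have hex : ∃ t, e t = cstar := by
    obtain ⟨T, hT⟩ := hstage m' le_rfl
    refine ⟨T, ?_⟩
    rw [he, hcstar]
    show ((List.range m').filter (fun x => w T x)).length = _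
    congr 1
    apply List.filter_congr
    intro x hx
    have hxm : x < m' := List.mem_range.1 hx
    apply bool_ext
    constructor
    · exact hsound T x hxm
    · exact hT x hxm
  set n₀ := Nat.find hex with hn₀
  have hspec : e n₀ = cstar := Nat.find_spec hex
  have hmin : ∀ t, t < n₀ → e t ≠ cstar := fun t ht => Nat.find_min hex ht
  -- pointwise equality at n₀
  have hpt : ∀ x, x < m' → w n₀ x = A x := by
    have hsl : ((List.range m').filter (fun x => w n₀ x && decide (x < m'))).Sublist
        ((List.range m').filter (fun x => A x)) := by
      apply List.monotone_filter_right
      intro x hx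
      rw [Bool.and_eq_true] at hx
      exact hsound n₀ x (of_decide_eq_true hx.2) hx.1
    have hlen : ((List.range m').filter (fun x => w n₀ x && decide (x < m'))).length
        = ((List.range m').filter (fun x => A x)).length := by
      rw [← hfilter_eq n₀]
      exact hspec
    have heq := hsl.eq_of_length hlen
    intro x hxm
    apply bool_ext
    constructor
    · exact hsound n₀ x hxm
    · intro hAx
      have hmem : x ∈ (List.range m').filter (fun x => A x) :=
        List.mem_filter.2 ⟨List.mem_range.2 hxm, hAx⟩
      rw [← heq] at hmem
      have := (List.mem_filter.1 hmem).2
      rw [Bool.and_eq_true] at this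
      exact this.1
  -- assemble σ
  refine ⟨res A (m' + n₀), ?_, mem_cyl_res A _⟩
  rw [PB, ← hm']
  have hlen : (res A (m'+n₀)).length = m'+n₀ := res_length A _
  rw [hlen]
  have hsub2 : m' + n₀ - m' = n₀ := by omega
  rw [hsub2]
  rw [Bool.and_eq_true, Bool.and_eq_true]
  refine ⟨⟨decide_eq_true (by omega), List.all_eq_true.2 ?_⟩, List.all_eq_true.2 ?_⟩
  · intro x hx
    have hxm : x < m' := List.mem_range.1 hx
    rw [beq_iff_eq, res_getD A (by omega)]
    exact (hpt x hxm).symm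
  · intro t ht
    have htn : t < n₀ := List.mem_range.1 ht
    apply decide_eq_true
    have h1 : ecnt cf m' t (res A (m'+n₀)) = e t := by
      rw [he]
      apply ecnt_congr cf
      intro z hz1 hz2
      rw [res_getD A (by omega), res_getD A (by omega)]
    have h2 : ecnt cf m' n₀ (res A (m'+n₀)) = e n₀ := rfl
    rw [h1, h2, hspec]
    exact lt_of_le_of_ne (hcap t) (hmin t htn)

end S18
/-- No 1-random set is uniformly introenumerable. -/
theorem stmt_18 (μ : Measure (ℕ → Bool)) (hμ : IsCoinMeasure μ)
    (A : ℕ → Bool) (h : MLRandom μ A) : ¬ UnifIntroenum (toSet A) := by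
  rintro ⟨hInf, W, hCE, hW⟩
  obtain ⟨f, hf, rfl⟩ := hCE
  obtain ⟨cf, hcf⟩ := Nat.Partrec.Code.exists_code.1 (Partrec.nat_iff.1 hf)
  obtain ⟨m, hm⟩ := h {p : ℕ × List Bool | S18.PB cf p.1 p.2 = true} (S18.ce_PB cf)
    (fun m => S18.meas_le μ hμ cf m)
  apply hm
  obtain ⟨σ, hσ, hA⟩ := S18.capture cf f hcf A hInf hW m
  exact Set.mem_biUnion hσ hA
end
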